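/- Let H be a Hopf algebra and F ∈ H⊗H an invertible element that is H-invariant (commutes with the image of Δ). Then ∂F = (1⊗F)(id⊗Δ)(F)(Δ⊗id)(F⁻¹)(F⁻¹⊗1) satisfies ∂(∂F) = 1 in H^{⊗4}, where ∂ on invertible elements of H^{⊗3} is defined by ∂Φ = Φ₂₃₄ · Φ_{1(23)4} · Φ₁₂₃ · (Φ⁻¹)_{(12)34} · (Φ⁻¹)_{12(34)} (leg notation). -/

import Mathlib

set_option maxHeartbeats 4000000
set_option synthInstance.maxHeartbeats 2000000

open TensorProduct

section

variable (k H : Type*) [Field k] [Ring H] [HopfAlgebra k H]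

/-- The coboundary of a 2-cochain `F ∈ H ⊗ H` with (two-sided) inverse `Finv`:
`∂F = (1 ⊗ F)·(id ⊗ Δ)(F)·(Δ ⊗ id)(F⁻¹)·(F⁻¹ ⊗ 1) ∈ H^{⊗3}`. -/
noncomputable def del2 (F Finv : H ⊗[k] H) : H ⊗[k] (H ⊗[k] H) :=
  ((1 : H) ⊗ₜ[k] F) *
    (TensorProduct.map LinearMap.id (Coalgebra.comul (R := k)) F) *
    ((TensorProduct.assoc k H H H)
      (TensorProduct.map (Coalgebra.comul (R := k)) LinearMap.id Finv)) *
    ((TensorProduct.assoc k H H H) (Finv ⊗ₜ[k] (1 : H)))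

/-- The coboundary of a 3-cochain `Φ ∈ H^{⊗3}` with (two-sided) inverse `Φinv`,
in leg notation: `∂Φ = Φ₂₃₄ · Φ_{1(23)4} · Φ₁₂₃ · (Φ⁻¹)_{(12)34} · (Φ⁻¹)_{12(34)}`,
an element of `H^{⊗4}` (right-associated). -/
noncomputable def del3 (Φ Φinv : H ⊗[k] (H ⊗[k] H)) : H ⊗[k] (H ⊗[k] (H ⊗[k] H)) :=
  ((1 : H) ⊗ₜ[k] Φ) *
    (TensorProduct.map LinearMap.id
      ((TensorProduct.assoc k H H H).toLinearMap ∘ₗ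
        TensorProduct.map (Coalgebra.comul (R := k)) LinearMap.id) Φ) *
    (TensorProduct.map LinearMap.id
      (TensorProduct.map LinearMap.id ((TensorProduct.mk k H H).flip (1 : H))) Φ) *
    ((TensorProduct.assoc k H H (H ⊗[k] H))
      (TensorProduct.map (Coalgebra.comul (R := k)) LinearMap.id Φinv)) *
    (TensorProduct.map LinearMap.id
      (TensorProduct.map LinearMap.id (Coalgebra.comul (R := k))) Φinv)

namespace DelSqAux

/-- An abstract monoid computation encapsulating the cancellation pattern of
`∂∂F = 1`. -/
theorem key {M : Type*} [Monoid M]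
    (f34 g34 f2_34 g2_34 f23_4 g23_4 f23 g23 f1_234 g1_234 f123_4 g123_4
      f1_23 g1_23 f12_3 g12_3 f12 g12 f12_34 g12_34 : M)
    (hfg34 : f34 * g34 = 1)
    (hfg2_34 : f2_34 * g2_34 = 1)
    (hgf23_4 : g23_4 * f23_4 = 1)
    (hgf23 : g23 * f23 = 1)
    (hfg1_234 : f1_234 * g1_234 = 1)
    (hgf123_4 : g123_4 * f123_4 = 1)
    (hgf1_23 : g1_23 * f1_23 = 1)
    (hgf12_3 : g12_3 * f12_3 = 1)
    (hgf12 : g12 * f12 = 1)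
    (hgf12_34 : g12_34 * f12_34 = 1)
    (ha : f23 * g1_23 = g1_23 * f23)
    (hb : f23 * g123_4 = g123_4 * f23)
    (hc : f23 * f1_234 = f1_234 * f23)
    (hd : f23 * f23_4 = f23_4 * f23)
    (he : f12_3 * g12 = g12 * f12_3)
    (hf : f123_4 * g12 = g12 * f123_4)
    (hg : f12 * g34 = g34 * f12)
    (hh : f12 * g12_34 = g12_34 * f12)
    (hi : f12_34 * g34 = g34 * f12_34)
    (hj : g34 * f1_234 = f1_234 * g34)
    (hk : g34 * f2_34 = f2_34 * g34) :
    (f34 * f2_34 * g23_4 * g23) * (f23_4 * f1_234 * g123_4 * g1_23) *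
      (f23 * f1_23 * g12_3 * g12) * (f12_3 * f123_4 * g12_34 * g34) *
      (f12 * f12_34 * g1_234 * g2_34) = 1 := by
  have comm_left : ∀ {a b : M}, a * b = b * a → ∀ z : M, b * (a * z) = a * (b * z) := by
    intro a b h z
    rw [← mul_assoc, ← h, mul_assoc]
  have cancel : ∀ {a b : M}, a * b = 1 → ∀ z : M, a * (b * z) = z := by
    intro a b h z
    rw [← mul_assoc, h, one_mul]
  simp only [mul_assoc]
  rw [comm_left ha, cancel hgf1_23, comm_left hb, comm_left hc, comm_left hd,
    cancel hgf23, cancel hgf23_4, comm_left he, cancel hgf12_3, comm_left hf,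
    cancel hgf123_4, comm_left hg, comm_left hh, cancel hgf12, comm_left hi,
    cancel hgf12_34, comm_left hj, cancel hfg1_234, comm_left hk,
    hfg2_34, mul_one, hfg34]

variable (k H : Type*) [Field k] [Ring H] [HopfAlgebra k H]

noncomputable def e1 : (H ⊗[k] H) →ₐ[k] H ⊗[k] (H ⊗[k] H) := Algebra.TensorProduct.includeRight
noncomputable def e2 : (H ⊗[k] H) →ₐ[k] H ⊗[k] (H ⊗[k] H) :=
  Algebra.TensorProduct.map (AlgHom.id k H) (Bialgebra.comulAlgHom k H)
noncomputable def e3 : (H ⊗[k] H) →ₐ[k] H ⊗[k] (H ⊗[k] H) :=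
  (Algebra.TensorProduct.assoc k k k H H H).toAlgHom.comp
    (Algebra.TensorProduct.map (Bialgebra.comulAlgHom k H) (AlgHom.id k H))
noncomputable def e4 : (H ⊗[k] H) →ₐ[k] H ⊗[k] (H ⊗[k] H) :=
  (Algebra.TensorProduct.assoc k k k H H H).toAlgHom.comp Algebra.TensorProduct.includeLeft

noncomputable def b0 : (H ⊗[k] (H ⊗[k] H)) →ₐ[k] H ⊗[k] (H ⊗[k] (H ⊗[k] H)) :=
  Algebra.TensorProduct.includeRight
noncomputable def b1 : (H ⊗[k] (H ⊗[k] H)) →ₐ[k] H ⊗[k] (H ⊗[k] (H ⊗[k] H)) :=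
  Algebra.TensorProduct.map (AlgHom.id k H) (e3 k H)
noncomputable def b2 : (H ⊗[k] (H ⊗[k] H)) →ₐ[k] H ⊗[k] (H ⊗[k] (H ⊗[k] H)) :=
  Algebra.TensorProduct.map (AlgHom.id k H)
    (Algebra.TensorProduct.map (AlgHom.id k H) Algebra.TensorProduct.includeLeft)
noncomputable def b3 : (H ⊗[k] (H ⊗[k] H)) →ₐ[k] H ⊗[k] (H ⊗[k] (H ⊗[k] H)) :=
  (Algebra.TensorProduct.assoc k k k H H (H ⊗[k] H)).toAlgHom.comp
    (Algebra.TensorProduct.map (Bialgebra.comulAlgHom k H) (AlgHom.id k (H ⊗[k] H)))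
noncomputable def b4 : (H ⊗[k] (H ⊗[k] H)) →ₐ[k] H ⊗[k] (H ⊗[k] (H ⊗[k] H)) :=
  Algebra.TensorProduct.map (AlgHom.id k H) (e2 k H)

theorem del2_eq (F G : H ⊗[k] H) :
    del2 k H F G = e1 k H F * e2 k H F * e3 k H G * e4 k H G := rfl

theorem del3_eq (Φ Ψ : H ⊗[k] (H ⊗[k] H)) :
    del3 k H Φ Ψ = b0 k H Φ * b1 k H Φ * b2 k H Φ * b3 k H Ψ * b4 k H Ψ := rfl

theorem assoc3_coe (x : (H ⊗[k] H) ⊗[k] H) :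
    (Algebra.TensorProduct.assoc k k k H H H) x = (TensorProduct.assoc k H H H) x := rfl
theorem assoc4_coe (x : (H ⊗[k] H) ⊗[k] (H ⊗[k] H)) :
    (Algebra.TensorProduct.assoc k k k H H (H ⊗[k] H)) x = (TensorProduct.assoc k H H (H ⊗[k] H)) x := rfl

theorem e1_apply (X : H ⊗[k] H) : e1 k H X = (1:H) ⊗ₜ[k] X := rfl
theorem e2_tmul (a b : H) : e2 k H (a ⊗ₜ[k] b) = a ⊗ₜ[k] (Coalgebra.comul (R:=k) b) := by
  simp [e2, Bialgebra.comulAlgHom_apply]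
theorem e2_apply (X : H ⊗[k] H) :
    e2 k H X = LinearMap.lTensor H (Coalgebra.comul (R:=k)) X := rfl
theorem e3_apply (X : H ⊗[k] H) :
    e3 k H X = (Algebra.TensorProduct.assoc k k k H H H)
      (LinearMap.rTensor H (Coalgebra.comul (R:=k)) X) := rfl
theorem e3_tmul (a b : H) :
    e3 k H (a ⊗ₜ[k] b) = (Algebra.TensorProduct.assoc k k k H H H)
      ((Coalgebra.comul (R:=k) a) ⊗ₜ[k] b) := rfl
theorem e4_apply (X : H ⊗[k] H) :
    e4 k H X = (Algebra.TensorProduct.assoc k k k H H H) (X ⊗ₜ[k] (1:H)) := rfl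
theorem e4_tmul (a b : H) :
    e4 k H (a ⊗ₜ[k] b) = a ⊗ₜ[k] (b ⊗ₜ[k] (1:H)) := by
  rw [e4_apply]; simp [Algebra.TensorProduct.assoc_tmul]

theorem e4_eq_map (X : H ⊗[k] H) :
    e4 k H X = Algebra.TensorProduct.map (AlgHom.id k H) Algebra.TensorProduct.includeLeft X := by
  induction X using TensorProduct.induction_on with
  | zero => simp
  | tmul a b => simp [e4_tmul]
  | add x y hx hy => simp [map_add, hx, hy]

theorem b0_apply (Y : H ⊗[k] (H ⊗[k] H)) : b0 k H Y = (1:H) ⊗ₜ[k] Y := rfl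
theorem b1_tmul (u : H) (c : H ⊗[k] H) : b1 k H (u ⊗ₜ[k] c) = u ⊗ₜ[k] (e3 k H c) := by
  simp [b1]
theorem b2_tmul (u : H) (c : H ⊗[k] H) :
    b2 k H (u ⊗ₜ[k] c) = u ⊗ₜ[k]
      (Algebra.TensorProduct.map (AlgHom.id k H) Algebra.TensorProduct.includeLeft c) := by
  simp [b2]
theorem b3_apply (Y : H ⊗[k] (H ⊗[k] H)) :
    b3 k H Y = (Algebra.TensorProduct.assoc k k k H H (H ⊗[k] H))
      (Algebra.TensorProduct.map (Bialgebra.comulAlgHom k H) (AlgHom.id k (H ⊗[k] H)) Y) := rfl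
theorem b3_tmul (u : H) (c : H ⊗[k] H) :
    b3 k H (u ⊗ₜ[k] c) = (Algebra.TensorProduct.assoc k k k H H (H ⊗[k] H))
      ((Coalgebra.comul (R:=k) u) ⊗ₜ[k] c) := by
  rw [b3_apply]; simp [Bialgebra.comulAlgHom_apply]
theorem b4_tmul (u : H) (c : H ⊗[k] H) : b4 k H (u ⊗ₜ[k] c) = u ⊗ₜ[k] (e2 k H c) := by
  simp [b4]

-- identification lemmas
theorem id1 (X : H ⊗[k] H) : b0 k H (e1 k H X) = b3 k H (e1 k H X) := by
  rw [e1_apply, b0_apply, b3_tmul]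
  simp [Algebra.TensorProduct.one_def, Algebra.TensorProduct.assoc_tmul]

theorem id2 (X : H ⊗[k] H) : b0 k H (e2 k H X) = b4 k H (e1 k H X) := by
  rw [e1_apply, b0_apply, b4_tmul]

theorem id3 (X : H ⊗[k] H) : b0 k H (e3 k H X) = b1 k H (e1 k H X) := by
  rw [e1_apply, b0_apply, b1_tmul]

theorem id4 (X : H ⊗[k] H) : b0 k H (e4 k H X) = b2 k H (e1 k H X) := by
  rw [e1_apply, b0_apply, b2_tmul, e4_eq_map]

theorem id7 (X : H ⊗[k] H) : b1 k H (e4 k H X) = b2 k H (e2 k H X) := by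
  induction X using TensorProduct.induction_on with
  | zero => simp
  | tmul a b =>
      rw [e4_tmul, e2_tmul, b1_tmul, b2_tmul]
      congr 1
      have : e3 k H (b ⊗ₜ[k] (1:H)) = e4 k H (Coalgebra.comul (R:=k) b) := by
        rw [e3_tmul, e4_apply]
      rw [this, e4_eq_map]
  | add x y hx hy => simp [map_add, hx, hy]

theorem id8 (X : H ⊗[k] H) : b2 k H (e3 k H X) = b3 k H (e4 k H X) := by
  induction X using TensorProduct.induction_on with
  | zero => simp
  | tmul a b =>
      rw [e3_tmul, e4_tmul, b3_tmul]
      generalize Coalgebra.comul (R:=k) a = c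
      induction c using TensorProduct.induction_on with
      | zero => simp
      | tmul x y =>
          simp [Algebra.TensorProduct.assoc_tmul, b2_tmul]
      | add x y hx hy =>
          simp only [add_tmul, map_add, hx, hy]
  | add x y hx hy => simp [map_add, hx, hy]

theorem id9 (X : H ⊗[k] H) : b2 k H (e4 k H X) = b4 k H (e4 k H X) := by
  induction X using TensorProduct.induction_on with
  | zero => simp
  | tmul a b =>
      rw [e4_tmul, b2_tmul, b4_tmul]
      simp [e2_tmul, Algebra.TensorProduct.one_def]
  | add x y hx hy => simp [map_add, hx, hy]

theorem id10 (X : H ⊗[k] H) : b3 k H (e2 k H X) = b4 k H (e3 k H X) := by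
  induction X using TensorProduct.induction_on with
  | zero => simp
  | tmul a b =>
      rw [e2_tmul, e3_tmul, b3_tmul]
      generalize Coalgebra.comul (R:=k) a = c
      induction c using TensorProduct.induction_on with
      | zero => simp
      | tmul x y =>
          simp [Algebra.TensorProduct.assoc_tmul, b4_tmul, e2_tmul]
      | add x y hx hy =>
          simp only [add_tmul, map_add, hx, hy]
  | add x y hx hy => simp [map_add, hx, hy]

theorem id5 (X : H ⊗[k] H) : b1 k H (e2 k H X) = b4 k H (e2 k H X) := by
  induction X using TensorProduct.induction_on with
  | zero => simp
  | tmul a b =>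
      rw [e2_tmul, b1_tmul, b4_tmul]
      congr 1
      rw [e3_apply, e2_apply]
      exact Coalgebra.coassoc_apply (R := k) b
  | add x y hx hy => simp [map_add, hx, hy]

theorem id6 (X : H ⊗[k] H) : b1 k H (e3 k H X) = b3 k H (e3 k H X) := by
  induction X using TensorProduct.induction_on with
  | zero => simp
  | tmul a b =>
      rw [e3_tmul]
      -- both sides applied to `assoc (comul a ⊗ b)`
      set L : H ⊗[k] (H ⊗[k] H) →ₗ[k] H ⊗[k] (H ⊗[k] (H ⊗[k] H)) :=
        TensorProduct.map LinearMap.id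
          ((TensorProduct.assoc k H H H).toLinearMap ∘ₗ
            (TensorProduct.mk k (H ⊗[k] H) H).flip b) with hL
      set R : (H ⊗[k] H) ⊗[k] H →ₗ[k] H ⊗[k] (H ⊗[k] (H ⊗[k] H)) :=
        (TensorProduct.assoc k H H (H ⊗[k] H)).toLinearMap ∘ₗ
          TensorProduct.map LinearMap.id ((TensorProduct.mk k H H).flip b) with hR
      have h1 : ∀ c : H ⊗[k] H,
          b1 k H ((Algebra.TensorProduct.assoc k k k H H H) (c ⊗ₜ[k] b)) =
            L (LinearMap.lTensor H (Coalgebra.comul (R:=k)) c) := by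
        intro c
        induction c using TensorProduct.induction_on with
        | zero => simp
        | tmul x y =>
            simp [Algebra.TensorProduct.assoc_tmul, b1_tmul, hL, e3_tmul, assoc3_coe]
        | add x y hx hy => simp only [add_tmul, map_add, hx, hy]
      have h2 : ∀ c : H ⊗[k] H,
          b3 k H ((Algebra.TensorProduct.assoc k k k H H H) (c ⊗ₜ[k] b)) =
            R (LinearMap.rTensor H (Coalgebra.comul (R:=k)) c) := by
        intro c
        induction c using TensorProduct.induction_on with
        | zero => simp
        | tmul x y =>
            simp [Algebra.TensorProduct.assoc_tmul, b3_tmul, hR, assoc4_coe]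
        | add x y hx hy => simp only [add_tmul, map_add, hx, hy]
      have h3 : ∀ d : H ⊗[k] (H ⊗[k] H),
          L d = R ((TensorProduct.assoc k H H H).symm d) := by
        intro d
        induction d using TensorProduct.induction_on with
        | zero => simp
        | tmul x w =>
            induction w using TensorProduct.induction_on with
            | zero => simp
            | tmul u v =>
                simp [hL, hR, Algebra.TensorProduct.assoc_tmul, assoc3_coe, assoc4_coe]
            | add w1 w2 h1' h2' =>
                simp only [tmul_add, map_add, h1', h2']
        | add x y hx hy => simp only [map_add, hx, hy]
      rw [h1, h2, h3, Coalgebra.coassoc_symm_apply]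
  | add x y hx hy => simp [map_add, hx, hy]

-- commutation lemmas coming from invariance
section Invariance

variable {k H}
variable {W : H ⊗[k] H}

theorem lemA (hW : ∀ a : H, W * Coalgebra.comul (R := k) a = Coalgebra.comul (R := k) a * W) : ∀ c : H ⊗[k] H,
    ((1:H) ⊗ₜ[k] W) * e2 k H c = e2 k H c * ((1:H) ⊗ₜ[k] W) := by
  intro c
  induction c using TensorProduct.induction_on with
  | zero => simp
  | tmul a b =>
      rw [e2_tmul, Algebra.TensorProduct.tmul_mul_tmul, Algebra.TensorProduct.tmul_mul_tmul,
        one_mul, mul_one, hW]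
  | add x y hx hy => simp only [map_add, mul_add, add_mul, hx, hy]

theorem lemB (hW : ∀ a : H, W * Coalgebra.comul (R := k) a = Coalgebra.comul (R := k) a * W) : ∀ c : H ⊗[k] H,
    (W ⊗ₜ[k] (1:H)) *
        (Algebra.TensorProduct.map (Bialgebra.comulAlgHom k H) (AlgHom.id k H) c) =
      (Algebra.TensorProduct.map (Bialgebra.comulAlgHom k H) (AlgHom.id k H) c) *
        (W ⊗ₜ[k] (1:H)) := by
  intro c
  induction c using TensorProduct.induction_on with
  | zero => simp
  | tmul a b =>
      rw [Algebra.TensorProduct.map_tmul, Bialgebra.comulAlgHom_apply,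
        Algebra.TensorProduct.tmul_mul_tmul, Algebra.TensorProduct.tmul_mul_tmul,
        one_mul, mul_one, hW, AlgHom.coe_id, id_eq]
  | add x y hx hy => simp only [map_add, mul_add, add_mul, hx, hy]

theorem lemB2 (hW : ∀ a : H, W * Coalgebra.comul (R := k) a = Coalgebra.comul (R := k) a * W) : ∀ Y : H ⊗[k] (H ⊗[k] H),
    (W ⊗ₜ[k] (1 : H ⊗[k] H)) *
        (Algebra.TensorProduct.map (Bialgebra.comulAlgHom k H) (AlgHom.id k (H ⊗[k] H)) Y) =
      (Algebra.TensorProduct.map (Bialgebra.comulAlgHom k H) (AlgHom.id k (H ⊗[k] H)) Y) *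
        (W ⊗ₜ[k] (1 : H ⊗[k] H)) := by
  intro Y
  induction Y using TensorProduct.induction_on with
  | zero => simp
  | tmul u c =>
      rw [Algebra.TensorProduct.map_tmul, Bialgebra.comulAlgHom_apply,
        Algebra.TensorProduct.tmul_mul_tmul, Algebra.TensorProduct.tmul_mul_tmul,
        one_mul, mul_one, hW, AlgHom.coe_id, id_eq]
  | add x y hx hy => simp only [map_add, mul_add, add_mul, hx, hy]

theorem b2e1 (X : H ⊗[k] H) : b2 k H (e1 k H X) = (1:H) ⊗ₜ[k] (e4 k H X) := by
  rw [e1_apply, b2_tmul, e4_eq_map]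

theorem b2e4 (X : H ⊗[k] H) :
    b2 k H (e4 k H X) =
      (Algebra.TensorProduct.assoc k k k H H (H ⊗[k] H)) (X ⊗ₜ[k] (1 : H ⊗[k] H)) := by
  induction X using TensorProduct.induction_on with
  | zero => simp
  | tmul a b =>
      rw [e4_tmul, b2_tmul, Algebra.TensorProduct.one_def (A := H) (B := H),
        Algebra.TensorProduct.assoc_tmul]
      simp
  | add x y hx hy => simp only [map_add, add_tmul, hx, hy]

theorem e3_alg (c : H ⊗[k] H) :
    e3 k H c = (Algebra.TensorProduct.assoc k k k H H H)
      (Algebra.TensorProduct.map (Bialgebra.comulAlgHom k H) (AlgHom.id k H) c) := rfl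

theorem C23' (hW : ∀ a : H, W * Coalgebra.comul (R := k) a = Coalgebra.comul (R := k) a * W) (c : H ⊗[k] H) : e4 k H W * e3 k H c = e3 k H c * e4 k H W := by
  rw [e4_apply, e3_alg, ← map_mul, lemB hW c, map_mul]

theorem C23 (hW : ∀ a : H, W * Coalgebra.comul (R := k) a = Coalgebra.comul (R := k) a * W) : ∀ Y : H ⊗[k] (H ⊗[k] H),
    b2 k H (e1 k H W) * b1 k H Y = b1 k H Y * b2 k H (e1 k H W) := by
  intro Y
  haveI := Distrib.leftDistribClass (H ⊗[k] (H ⊗[k] (H ⊗[k] H)))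
  haveI := Distrib.rightDistribClass (H ⊗[k] (H ⊗[k] (H ⊗[k] H)))
  induction Y using TensorProduct.induction_on with
  | zero => rw [map_zero]; exact (mul_zero (M₀ := H ⊗[k] (H ⊗[k] (H ⊗[k] H))) _).trans (zero_mul _).symm
  | tmul u c =>
      rw [b2e1, b1_tmul, Algebra.TensorProduct.tmul_mul_tmul,
        Algebra.TensorProduct.tmul_mul_tmul, one_mul, mul_one, C23' hW c]
  | add x y hx hy => rw [map_add, mul_add, add_mul, hx, hy]

theorem C12 (hW : ∀ a : H, W * Coalgebra.comul (R := k) a = Coalgebra.comul (R := k) a * W) : ∀ Y : H ⊗[k] (H ⊗[k] H),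
    b2 k H (e4 k H W) * b3 k H Y = b3 k H Y * b2 k H (e4 k H W) := by
  intro Y
  rw [b2e4, b3_apply, ← map_mul, lemB2 hW Y, map_mul]

theorem C34 (hW : ∀ a : H, W * Coalgebra.comul (R := k) a = Coalgebra.comul (R := k) a * W) : ∀ Y : H ⊗[k] (H ⊗[k] H),
    b0 k H (e1 k H W) * b4 k H Y = b4 k H Y * b0 k H (e1 k H W) := by
  intro Y
  haveI := Distrib.leftDistribClass (H ⊗[k] (H ⊗[k] (H ⊗[k] H)))
  haveI := Distrib.rightDistribClass (H ⊗[k] (H ⊗[k] (H ⊗[k] H)))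
  induction Y using TensorProduct.induction_on with
  | zero => rw [map_zero]; exact (mul_zero (M₀ := H ⊗[k] (H ⊗[k] (H ⊗[k] H))) _).trans (zero_mul _).symm
  | tmul u c =>
      rw [b0_apply, e1_apply, b4_tmul, Algebra.TensorProduct.tmul_mul_tmul,
        Algebra.TensorProduct.tmul_mul_tmul, one_mul, mul_one, lemA hW c]
  | add x y hx hy => rw [map_add, mul_add, add_mul, hx, hy]

end Invariance

theorem cancel_aux {M : Type*} [Monoid M] {a b : M} (h : a * b = 1) (z : M) :
    a * (b * z) = z := by
  rw [← mul_assoc, h, one_mul]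

end DelSqAux

open DelSqAux in
/-- Let `F ∈ H ⊗ H` be invertible and `H`-invariant (it commutes with the image of
`Δ`).  Then `∂(∂F) = 1` in `H^{⊗4}`, where `∂F` and `∂` of a 3-cochain are
computed with the respective (two-sided) inverses. -/
theorem del_squared_of_invariant (F Finv : H ⊗[k] H)
    (hinv₁ : F * Finv = 1) (hinv₂ : Finv * F = 1)
    (hinvariant : ∀ a : H, F * Coalgebra.comul (R := k) a = Coalgebra.comul (R := k) a * F) :
    ∀ Φinv : H ⊗[k] (H ⊗[k] H),
      del2 k H F Finv * Φinv = 1 → Φinv * del2 k H F Finv = 1 →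
        del3 k H (del2 k H F Finv) Φinv = 1 := by
  intro Φinv hΦ₁ hΦ₂
  have hGinv : ∀ a : H, Finv * Coalgebra.comul (R := k) a = Coalgebra.comul (R := k) a * Finv := by
    intro a
    calc Finv * Coalgebra.comul (R := k) a
        = Finv * Coalgebra.comul (R := k) a * (F * Finv) := by rw [hinv₁, mul_one]
      _ = Finv * (Coalgebra.comul (R := k) a * F) * Finv := by
          rw [← mul_assoc, mul_assoc Finv]
      _ = Finv * (F * Coalgebra.comul (R := k) a) * Finv := by rw [← hinvariant a]
      _ = Coalgebra.comul (R := k) a * Finv := by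
          rw [← mul_assoc Finv F, hinv₂, one_mul]
  -- the explicit inverse of del2
  set Ψ : H ⊗[k] (H ⊗[k] H) :=
    e4 k H F * e3 k H F * e2 k H Finv * e1 k H Finv with hΨ
  have hpair : ∀ j : Fin 4, True := fun _ => trivial
  have h44 : e4 k H Finv * e4 k H F = 1 := by rw [← map_mul, hinv₂, map_one]
  have h33 : e3 k H Finv * e3 k H F = 1 := by rw [← map_mul, hinv₂, map_one]
  have h22 : e2 k H F * e2 k H Finv = 1 := by rw [← map_mul, hinv₁, map_one]
  have h11 : e1 k H F * e1 k H Finv = 1 := by rw [← map_mul, hinv₁, map_one]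
  have hdel2R : del2 k H F Finv * Ψ = 1 := by
    rw [del2_eq, hΨ]
    simp only [mul_assoc]
    rw [cancel_aux h44, cancel_aux h33, cancel_aux h22, ← map_mul, hinv₁, map_one]
  have hΦinv : Φinv = Ψ := by
    have h := congrArg (fun z => Φinv * z) hdel2R
    simp only [mul_one] at h
    rw [← mul_assoc, hΦ₂, one_mul] at h
    exact h.symm
  rw [hΦinv, del3_eq, del2_eq, hΨ]
  simp only [map_mul]
  rw [id3 k H Finv, id4 k H Finv, id7 k H Finv, id8 k H Finv, ← id6 k H F,
    ← id1 k H Finv, ← id9 k H F, ← id10 k H F, ← id5 k H Finv, ← id2 k H Finv]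
  -- inverse-pair facts in H^{⊗4}
  have hP : ∀ (b : (H ⊗[k] (H ⊗[k] H)) →ₐ[k] H ⊗[k] (H ⊗[k] (H ⊗[k] H)))
      (e : (H ⊗[k] H) →ₐ[k] H ⊗[k] (H ⊗[k] H)), b (e F) * b (e Finv) = 1 := by
    intro b e
    rw [← map_mul, ← map_mul, hinv₁, map_one e]; exact b.map_one'
  have hQ : ∀ (b : (H ⊗[k] (H ⊗[k] H)) →ₐ[k] H ⊗[k] (H ⊗[k] (H ⊗[k] H)))
      (e : (H ⊗[k] H) →ₐ[k] H ⊗[k] (H ⊗[k] H)), b (e Finv) * b (e F) = 1 := by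
    intro b e
    rw [← map_mul, ← map_mul, hinv₂, map_one e]; exact b.map_one'
  -- commutation facts
  have ha : b2 k H (e1 k H F) * b2 k H (e2 k H Finv) =
      b2 k H (e2 k H Finv) * b2 k H (e1 k H F) := by
    have h := C23 hinvariant (e4 k H Finv)
    rw [id7 k H Finv] at h
    exact h
  have hb := C23 hinvariant (e3 k H Finv)
  have hc := C23 hinvariant (e2 k H F)
  have hd := C23 hinvariant (e1 k H F)
  have he : b3 k H (e4 k H F) * b2 k H (e4 k H Finv) =
      b2 k H (e4 k H Finv) * b3 k H (e4 k H F) :=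
    (C12 hGinv (e4 k H F)).symm
  have hf : b1 k H (e3 k H F) * b2 k H (e4 k H Finv) =
      b2 k H (e4 k H Finv) * b1 k H (e3 k H F) := by
    have h := C12 hGinv (e3 k H F)
    rw [← id6 k H F] at h
    exact h.symm
  have hg : b2 k H (e4 k H F) * b0 k H (e1 k H Finv) =
      b0 k H (e1 k H Finv) * b2 k H (e4 k H F) := by
    have h := C12 hinvariant (e1 k H Finv)
    rw [← id1 k H Finv] at h
    exact h
  have hh := C12 hinvariant (e2 k H Finv)
  have hi : b3 k H (e2 k H F) * b0 k H (e1 k H Finv) =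
      b0 k H (e1 k H Finv) * b3 k H (e2 k H F) := by
    have h := C34 hGinv (e3 k H F)
    rw [← id10 k H F] at h
    exact h.symm
  have hj : b0 k H (e1 k H Finv) * b1 k H (e2 k H F) =
      b1 k H (e2 k H F) * b0 k H (e1 k H Finv) := by
    have h := C34 hGinv (e2 k H F)
    rw [← id5 k H F] at h
    exact h
  have hk : b0 k H (e1 k H Finv) * b0 k H (e2 k H F) =
      b0 k H (e2 k H F) * b0 k H (e1 k H Finv) := by
    have h := C34 hGinv (e1 k H F)
    rw [← id2 k H F] at h
    exact h
  exact key (M := H ⊗[k] (H ⊗[k] (H ⊗[k] H))) _ _ _ _ _ _ _ _ _ _ _ _ _ _ _ _ _ _ _ _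
    (hP (b0 k H) (e1 k H)) (hP (b0 k H) (e2 k H)) (hQ (b1 k H) (e1 k H))
    (hQ (b2 k H) (e1 k H)) (hP (b1 k H) (e2 k H)) (hQ (b1 k H) (e3 k H))
    (hQ (b2 k H) (e2 k H)) (hQ (b3 k H) (e4 k H)) (hQ (b2 k H) (e4 k H))
    (hQ (b3 k H) (e2 k H)) ha hb hc hd he hf hg hh hi hj hk

end
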